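/- For $\lambda, \alpha \in \mathbb{C}^*$ and $\beta, \gamma \in \mathbb{C}$, the formulas defining $\Theta(\lambda, \alpha, \beta, \gamma)$ make $\mathbb{C}[s,t]$ into a module over the affine-Virasoro algebra of type $A_1$. -/

import Mathlib

open MvPolynomial

/-- `ℂ[s,t]`, with `s = X 0` and `t = X 1`. -/
noncomputable abbrev P2 : Type := MvPolynomial (Fin 2) ℂ

/-- Substitution `g(s,t) ↦ g(s - i, t + a)`. -/
noncomputable def subST (i : ℤ) (a : ℂ) : P2 →ₐ[ℂ] P2 :=
  aeval ![X 0 - C (i : ℂ), X 1 + C a]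

/-- Action of `e_i` on `Θ(λ,α,β,γ)`: `e_i(g) = λ^i α (t/2+β) g(s-i, t-2)`. -/
noncomputable def thE (lam alp bet : ℂ) (i : ℤ) (g : P2) : P2 :=
  (lam ^ i * alp) • ((C (1/2 : ℂ) * X 1 + C bet) * subST i (-2) g)

/-- Action of `f_i` on `Θ(λ,α,β,γ)`: `f_i(g) = -(λ^i/α)(t/2-β) g(s-i, t+2)`. -/
noncomputable def thF (lam alp bet : ℂ) (i : ℤ) (g : P2) : P2 :=
  (-(lam ^ i / alp)) • ((C (1/2 : ℂ) * X 1 - C bet) * subST i 2 g)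

/-- Action of `h_i`: `h_i(g) = λ^i t g(s-i, t)`. -/
noncomputable def thH (lam : ℂ) (i : ℤ) (g : P2) : P2 :=
  lam ^ i • (X 1 * subST i 0 g)

/-- Action of `d_i`: `d_i(g) = λ^i (s + iγ) g(s-i, t)`. -/
noncomputable def thD (lam gam : ℂ) (i : ℤ) (g : P2) : P2 :=
  lam ^ i • ((X 0 + C ((i : ℂ) * gam)) * subST i 0 g)

/-- Action of `C`: `C(g) = 0`. -/
noncomputable def thC (g : P2) : P2 := 0


lemma eval_subST' (x : Fin 2 → ℂ) (i : ℤ) (a : ℂ) (g : P2) :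
    eval x (subST i a g) = eval ![x 0 - (i : ℂ), x 1 + a] g := by
  rw [subST, map_aeval]
  have hc : (eval x : P2 →+* ℂ).comp (algebraMap ℂ P2) = RingHom.id ℂ := by ext r; simp
  have hfun : (fun k => eval x (![X 0 - C (i : ℂ), X 1 + C a] k))
      = ![x 0 - (i : ℂ), x 1 + a] := by funext k; fin_cases k <;> simp
  rw [hc, hfun]; rfl

set_option maxHeartbeats 4000000 in
/-- The formulas for `Θ(λ,α,β,γ)` make `ℂ[s,t]` a module over the affine-Virasoro algebra of
type `A₁`: the action respects all the defining Lie brackets. -/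
theorem stmt9 (lam alp : ℂ) (hlam : lam ≠ 0) (halp : alp ≠ 0) (bet gam : ℂ) :
    ∀ (i j : ℤ) (g : P2),
      (thE lam alp bet i (thF lam alp bet j g) - thF lam alp bet j (thE lam alp bet i g) =
        thH lam (i + j) g + (if i + j = 0 then (i : ℂ) else 0) • thC g) ∧
      (thH lam i (thE lam alp bet j g) - thE lam alp bet j (thH lam i g) =
        (2 : ℂ) • thE lam alp bet (i + j) g) ∧
      (thH lam i (thF lam alp bet j g) - thF lam alp bet j (thH lam i g) =
        (-2 : ℂ) • thF lam alp bet (i + j) g) ∧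
      (thD lam gam i (thD lam gam j g) - thD lam gam j (thD lam gam i g) =
        ((j : ℂ) - (i : ℂ)) • thD lam gam (i + j) g +
          (if i + j = 0 then ((i : ℂ) ^ 3 - (i : ℂ)) / 12 else 0) • thC g) ∧
      (thD lam gam i (thH lam j g) - thH lam j (thD lam gam i g) =
        (j : ℂ) • thH lam (i + j) g) ∧
      (thH lam i (thH lam j g) - thH lam j (thH lam i g) =
        (if i + j = 0 then (-2 * (i : ℂ)) else 0) • thC g) ∧
      (thD lam gam i (thE lam alp bet j g) - thE lam alp bet j (thD lam gam i g) =
        (j : ℂ) • thE lam alp bet (i + j) g) ∧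
      (thD lam gam i (thF lam alp bet j g) - thF lam alp bet j (thD lam gam i g) =
        (j : ℂ) • thF lam alp bet (i + j) g) ∧
      (thE lam alp bet i (thE lam alp bet j g) = thE lam alp bet j (thE lam alp bet i g)) ∧
      (thF lam alp bet i (thF lam alp bet j g) = thF lam alp bet j (thF lam alp bet i g)) ∧
      (thE lam alp bet i (thC g) = thC (thE lam alp bet i g)) ∧
      (thF lam alp bet i (thC g) = thC (thF lam alp bet i g)) ∧
      (thH lam i (thC g) = thC (thH lam i g)) ∧
      (thD lam gam i (thC g) = thC (thD lam gam i g)) := by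
  intro i j g
  refine ⟨?_, ?_, ?_, ?_, ?_, ?_, ?_, ?_, ?_, ?_, ?_, ?_, ?_, ?_⟩ <;>
  · apply MvPolynomial.funext
    intro x
    simp only [thE, thF, thH, thD, thC, smul_zero, add_zero, smul_eq_C_mul, map_sub, map_add,
      map_mul, map_zero, mul_zero, zero_mul, eval_subST', eval_C, eval_X, eval_zero,
      Matrix.cons_val_zero, Matrix.cons_val_one, Matrix.head_cons, algHom_C, map_neg,
      map_div₀, map_one, map_ofNat, zpow_add₀ hlam, MvPolynomial.algebraMap_eq]
    try push_cast
    try field_simp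
    try ring
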